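/- (Categorical Krull–Remak–Schmidt) Let C_i (i ∈ Γ) and D_j (j ∈ Λ) be connected triangulated R-linear categories, and suppose Φ : ⊕_{i ∈ Γ} C_i → ⊕_{j ∈ Λ} D_j is an equivalence of triangulated categories. Then there is a bijection π : Γ → Λ such that C_i is triangle equivalent to D_{π(i)} for all i ∈ Γ. -/

import Mathlib

/-!
STATEMENT 4 (Categorical Krull–Remak–Schmidt): If `Φ : ⊕_{i ∈ Γ} C_i ≌ ⊕_{j ∈ Λ} D_j` is a
triangulated `R`-linear equivalence between direct sums of connected triangulated
`R`-linear categories, then there is a bijection `π : Γ → Λ` such that `Φ` restricts to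
an equivalence `C_i ≌ D_{π(i)}` for every `i`.
-/

open CategoryTheory Limits Pretriangulated Triangulated ZeroObject

universe v u

namespace CategoryTheory.Triangulated

variable (C : Type u) [Category.{v} C] [HasZeroObject C] [HasShift C ℤ] [Preadditive C]
  [∀ n : ℤ, (shiftFunctor C n).Additive] [Pretriangulated C]

/-- The former Mathlib structure of triangulated subcategories (removed upstream). -/
structure Subcategory where
  P : C → Prop
  zero' : ∃ (Z : C) (_ : IsZero Z), P Z
  shift (X : C) (n : ℤ) : P X → P (X⟦n⟧)
  ext₂' (T : Triangle C) (_ : T ∈ distTriang C) : P T.obj₁ → P T.obj₃ →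
    ObjectProperty.isoClosure P T.obj₂

end CategoryTheory.Triangulated

section Defs

variable {E : Type u} [Category.{v} E] [HasZeroObject E] [HasShift E ℤ] [Preadditive E]
  [∀ n : ℤ, (shiftFunctor E n).Additive] [Pretriangulated E]

/-- The iterated binary biproduct of a list of objects. -/
noncomputable def sumList : List E → E
  | [] => 0
  | X :: l => X ⊞ sumList l

/-- A triangulated subcategory is thick if it is closed under direct summands. -/
def IsThick (S : Triangulated.Subcategory E) : Prop :=
  ∀ (X Y Z : E), Nonempty (Z ≅ X ⊞ Y) → S.P Z → S.P X

/-- There are no nonzero morphisms from objects satisfying `P` to objects satisfying `Q`. -/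
def HomOrth (P Q : E → Prop) : Prop :=
  ∀ ⦃X Y : E⦄ (f : X ⟶ Y), P X → Q Y → f = 0

/-- The class of objects `P` (e.g. the objects of a triangulated subcategory, or the whole
category via `P = fun _ => True`) is connected: it contains a nonzero object, and for any two
triangulated subcategories `S₁, S₂` contained in `P`, with no morphisms between them in either
direction, such that every object satisfying `P` decomposes as a direct sum of an object of
`S₁` and an object of `S₂`, one of `S₁`, `S₂` consists of zero objects only. -/
def IsConnectedP (P : E → Prop) : Prop :=
  (∃ X : E, P X ∧ ¬ IsZero X) ∧
  ∀ S₁ S₂ : Triangulated.Subcategory E,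
    (∀ X, S₁.P X → P X) → (∀ X, S₂.P X → P X) →
    HomOrth S₁.P S₂.P → HomOrth S₂.P S₁.P →
    (∀ X, P X → ∃ X₁ X₂, S₁.P X₁ ∧ S₂.P X₂ ∧ Nonempty (X ≅ X₁ ⊞ X₂)) →
    (∀ X, S₁.P X → IsZero X) ∨ (∀ X, S₂.P X → IsZero X)

/-- The family of triangulated subcategories `S j` realizes the ambient category as the
direct sum `⊕_j S j`: each `S j` is closed under isomorphisms, there are no nonzero morphisms
between distinct summands, and every object is a finite direct sum of objects of the `S j`. -/
def IsDirectSumDecomp {ι : Type*} (S : ι → Triangulated.Subcategory E) : Prop :=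
  (∀ i, ObjectProperty.IsClosedUnderIsomorphisms (S i).P) ∧
  (∀ i j, i ≠ j → HomOrth (S i).P (S j).P) ∧
  (∀ X : E, ∃ l : List E, (∀ Y ∈ l, ∃ i, (S i).P Y) ∧ Nonempty (X ≅ sumList l))

/-- An object is indecomposable if it is nonzero and in any direct sum decomposition
one of the summands is zero. -/
def Indec (X : E) : Prop :=
  ¬ IsZero X ∧ ∀ (Y Z : E), Nonempty (X ≅ Y ⊞ Z) → IsZero Y ∨ IsZero Z

/-- A Krull–Remak–Schmidt triangulated category: every object is a finite direct sum of
objects with local endomorphism rings. -/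
def IsKrullSchmidtCat : Prop :=
  ∀ X : E, ∃ l : List E, (∀ Y ∈ l, IsLocalRing (End Y)) ∧ Nonempty (X ≅ sumList l)

/-- `thickClosure X` is the class of objects of the smallest thick subcategory
containing `X`. -/
def thickClosure (X Y : E) : Prop :=
  ∀ S : Triangulated.Subcategory E, IsThick S → S.P X → S.P Y

end Defs

namespace CategoryTheory.Triangulated.Subcategory

variable {E : Type u} [Category.{v} E] [HasZeroObject E] [HasShift E ℤ] [Preadditive E]
  [∀ n : ℤ, (shiftFunctor E n).Additive] [Pretriangulated E]

def mk' (P : E → Prop) (zero : P 0) (shift : ∀ (X : E) (n : ℤ), P X → P (X⟦n⟧))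
    (ext₂ : ∀ (T : Triangle E) (_ : T ∈ distTriang E), P T.obj₁ → P T.obj₃ → P T.obj₂) :
    Subcategory E where
  P := P
  zero' := ⟨0, isZero_zero _, zero⟩
  shift := shift
  ext₂' T hT h₁ h₃ := ObjectProperty.le_isoClosure P _ (ext₂ T hT h₁ h₃)

instance (P : E → Prop) [ObjectProperty.IsClosedUnderIsomorphisms P] (zero : P 0)
    (shift : ∀ (X : E) (n : ℤ), P X → P (X⟦n⟧))
    (ext₂ : ∀ (T : Triangle E) (_ : T ∈ distTriang E), P T.obj₁ → P T.obj₃ → P T.obj₂) :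
    ObjectProperty.IsClosedUnderIsomorphisms (mk' P zero shift ext₂).P := by
  dsimp [mk']; infer_instance

lemma zero (S : Subcategory E) [ObjectProperty.IsClosedUnderIsomorphisms S.P] : S.P 0 := by
  obtain ⟨X, hX, mem⟩ := S.zero'
  exact ObjectProperty.prop_of_iso _ hX.isoZero mem

lemma ext₂ (S : Subcategory E) [ObjectProperty.IsClosedUnderIsomorphisms S.P]
    (T : Triangle E) (hT : T ∈ distTriang E) (h₁ : S.P T.obj₁) (h₃ : S.P T.obj₃) :
    S.P T.obj₂ := by
  obtain ⟨Y, hY, ⟨e⟩⟩ := S.ext₂' T hT h₁ h₃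
  exact ObjectProperty.prop_of_iso _ e.symm hY

end CategoryTheory.Triangulated.Subcategory

namespace KRS

open CategoryTheory Limits Pretriangulated Triangulated ZeroObject

section One

variable {E : Type u} [Category.{v} E] [HasZeroObject E] [HasShift E ℤ] [Preadditive E]
  [∀ n : ℤ, (shiftFunctor E n).Additive] [Pretriangulated E]

lemma isZero_of_retract {X A : E} (hX : IsZero X) (ι : A ⟶ X) (ρ : X ⟶ A)
    (h : ι ≫ ρ = 𝟙 A) : IsZero A := by
  rw [IsZero.iff_id_eq_zero, ← h, hX.eq_of_src ρ 0, comp_zero]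

/-- `A ⊞ B ≅ A` when `B` is zero. -/
noncomputable def biprodIsoLeft (A : E) {B : E} (hB : IsZero B) : A ⊞ B ≅ A where
  hom := biprod.fst
  inv := biprod.inl
  hom_inv_id := by
    apply biprod.hom_ext' <;> simp [hB.eq_of_src biprod.inr 0]
  inv_hom_id := by simp

/-- The two-sided orthogonal complement of a shift-stable class of objects is a
triangulated subcategory. -/
def perp (Q : E → Prop) (hQ : ∀ (Z : E) (n : ℤ), Q Z → Q (Z⟦n⟧)) :
    Triangulated.Subcategory E :=
  Subcategory.mk'
    (fun Y => ∀ Z : E, Q Z → (∀ f : Y ⟶ Z, f = 0) ∧ (∀ g : Z ⟶ Y, g = 0))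
    (fun Z _ => ⟨fun f => (isZero_zero E).eq_of_src f 0, fun g => (isZero_zero E).eq_of_tgt g 0⟩)
    (fun Y n hY Z hZ => by
      constructor
      · intro f
        have h1 : ((shiftFunctorCompIsoId E n (-n) (by omega)).app Y).inv
            ≫ (shiftFunctor E (-n)).map f = 0 := (hY (Z⟦(-n : ℤ)⟧) (hQ Z (-n) hZ)).1 _
        have h2 : (shiftFunctor E (-n)).map f = 0 := by
          rw [← cancel_epi ((shiftFunctorCompIsoId E n (-n) (by omega)).app Y).inv, h1, comp_zero]
        exact (shiftFunctor E (-n)).map_injective (by rw [h2, Functor.map_zero])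
      · intro g
        have h1 : (shiftFunctor E (-n)).map g
            ≫ ((shiftFunctorCompIsoId E n (-n) (by omega)).app Y).hom = 0 :=
          (hY (Z⟦(-n : ℤ)⟧) (hQ Z (-n) hZ)).2 _
        have h2 : (shiftFunctor E (-n)).map g = 0 := by
          rw [← cancel_mono ((shiftFunctorCompIsoId E n (-n) (by omega)).app Y).hom, h1, zero_comp]
        exact (shiftFunctor E (-n)).map_injective (by rw [h2, Functor.map_zero]))
    (fun T hT h₁ h₃ Z hZ => by
      constructor
      · intro f
        obtain ⟨g, hg⟩ := Triangle.yoneda_exact₂ T hT f ((h₁ Z hZ).1 _)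
        rw [hg, (h₃ Z hZ).1 g, comp_zero]
      · intro g
        obtain ⟨g', hg'⟩ := Triangle.coyoneda_exact₂ T hT g ((h₃ Z hZ).2 _)
        rw [hg', (h₁ Z hZ).2 g', zero_comp])

instance (Q : E → Prop) (hQ : ∀ (Z : E) (n : ℤ), Q Z → Q (Z⟦n⟧)) :
    ObjectProperty.IsClosedUnderIsomorphisms (perp Q hQ).P := by
  constructor
  intro X Y e h
  have h' : ∀ Z : E, Q Z → (∀ f : X ⟶ Z, f = 0) ∧ (∀ g : Z ⟶ X, g = 0) := h
  show ∀ Z : E, Q Z → (∀ f : Y ⟶ Z, f = 0) ∧ (∀ g : Z ⟶ Y, g = 0)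
  intro Z hZ
  refine ⟨fun f => ?_, fun g => ?_⟩
  · rw [← Iso.inv_hom_id_assoc e f, (h' Z hZ).1 (e.hom ≫ f), comp_zero]
  · rw [← Category.comp_id g, ← e.inv_hom_id, ← Category.assoc, (h' Z hZ).2 (g ≫ e.inv),
      zero_comp]

lemma perp_mem {Q : E → Prop} {hQ : ∀ (Z : E) (n : ℤ), Q Z → Q (Z⟦n⟧)} {Y : E}
    (h : ∀ Z : E, Q Z → (∀ f : Y ⟶ Z, f = 0) ∧ (∀ g : Z ⟶ Y, g = 0)) : (perp Q hQ).P Y := h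

lemma perp_def {Q : E → Prop} {hQ : ∀ (Z : E) (n : ℤ), Q Z → Q (Z⟦n⟧)} {Y : E}
    (h : (perp Q hQ).P Y) :
    ∀ Z : E, Q Z → (∀ f : Y ⟶ Z, f = 0) ∧ (∀ g : Z ⟶ Y, g = 0) := h

lemma biprod_mem (S : Triangulated.Subcategory E) [ObjectProperty.IsClosedUnderIsomorphisms S.P] {X Y : E}
    (hX : S.P X) (hY : S.P Y) : S.P (X ⊞ Y) :=
  S.ext₂ _ (binaryBiproductTriangle_distinguished X Y) hX hY

lemma mem_of_isZero (S : Triangulated.Subcategory E) [ObjectProperty.IsClosedUnderIsomorphisms S.P] {X : E}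
    (h : IsZero X) : S.P X :=
  ObjectProperty.prop_of_iso S.P h.isoZero.symm S.zero

lemma sumList_mem (S : Triangulated.Subcategory E) [ObjectProperty.IsClosedUnderIsomorphisms S.P] :
    ∀ l : List E, (∀ Y ∈ l, S.P Y) → S.P (sumList l)
  | [], _ => S.zero
  | X :: t, h => biprod_mem S (h X (by simp)) (sumList_mem S t fun Y hY => h Y (by simp [hY]))

lemma isZero_sumList : ∀ l : List E, (∀ Y ∈ l, IsZero Y) → IsZero (sumList l)
  | [], _ => isZero_zero E
  | X :: t, h => (biprod_isZero_iff _ _).2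
      ⟨h X (by simp), isZero_sumList t fun Y hY => h Y (by simp [hY])⟩

lemma retract_sumList : ∀ (l : List E) (Y : E), Y ∈ l →
    ∃ (ι : Y ⟶ sumList l) (ρ : sumList l ⟶ Y), ι ≫ ρ = 𝟙 Y := by
  intro l
  induction l with
  | nil => intro Y h; simp at h
  | cons X t ih =>
    intro Y h
    rcases List.mem_cons.1 h with h | h
    · subst h
      exact ⟨biprod.inl, biprod.fst, (by simp : (biprod.inl : Y ⟶ Y ⊞ sumList t) ≫ biprod.fst = 𝟙 Y)⟩
    · obtain ⟨ι, ρ, hιρ⟩ := ih Y h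
      exact ⟨ι ≫ biprod.inr, biprod.snd ≫ ρ,
          (by simp [hιρ] : (ι ≫ (biprod.inr : sumList t ⟶ X ⊞ sumList t)) ≫ (biprod.snd ≫ ρ) = 𝟙 Y)⟩

end One

end KRS
namespace KRS

open CategoryTheory Limits Pretriangulated Triangulated ZeroObject

section Two

variable {E : Type u} [Category.{v} E] [HasZeroObject E] [HasShift E ℤ] [Preadditive E]
  [∀ n : ℤ, (shiftFunctor E n).Additive] [Pretriangulated E]
  {Γ : Type*} (S : Γ → Triangulated.Subcategory E)

/-- The orthogonal complement of one summand. -/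
def sPerp (i : Γ) : Triangulated.Subcategory E := perp (S i).P (S i).shift

instance (i : Γ) : ObjectProperty.IsClosedUnderIsomorphisms (sPerp S i).P := by
  unfold sPerp; infer_instance

variable {S}

lemma mem_of_retract (hS : IsDirectSumDecomp S) {i : Γ} {X A : E} (hX : (S i).P X)
    (ι : A ⟶ X) (ρ : X ⟶ A) (hιρ : ι ≫ ρ = 𝟙 A) : (S i).P A := by
  haveI := hS.1 i
  obtain ⟨l, hl, ⟨e⟩⟩ := hS.2.2 A
  refine ObjectProperty.prop_of_iso (S i).P e.symm (sumList_mem (S i) l fun Y hY => ?_)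
  obtain ⟨k, hk⟩ := hl Y hY
  by_cases hki : k = i
  · exact hki ▸ hk
  · obtain ⟨ι', ρ', hιρ'⟩ := retract_sumList l Y hY
    refine mem_of_isZero (S i) ((IsZero.iff_id_eq_zero Y).2 ?_)
    have hz : (ρ ≫ e.hom ≫ ρ' : X ⟶ Y) = 0 := hS.2.1 i k (fun h => hki h.symm) _ hX hk
    have h2 : 𝟙 Y = (ι' ≫ e.inv ≫ ι) ≫ (ρ ≫ e.hom ≫ ρ') := by
      simp only [Category.assoc, reassoc_of% hιρ, Iso.inv_hom_id_assoc, hιρ']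
    rw [h2, hz, comp_zero]

lemma split_list (hS : IsDirectSumDecomp S) (i : Γ) :
    ∀ l : List E, (∀ Y ∈ l, ∃ k, (S k).P Y) →
      ∃ A B : E, (S i).P A ∧ (sPerp S i).P B ∧ Nonempty (sumList l ≅ A ⊞ B) := by
  haveI := hS.1 i
  intro l
  induction l with
  | nil =>
    intro _
    exact ⟨0, 0, (S i).zero, (sPerp S i).zero,
      ⟨(isZero_zero E).iso ((biprod_isZero_iff _ _).2 ⟨isZero_zero E, isZero_zero E⟩)⟩⟩
  | cons X t ih =>
    intro h
    obtain ⟨A, B, hA, hB, ⟨e⟩⟩ := ih (fun Y hY => h Y (by simp [hY]))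
    obtain ⟨k, hk⟩ := h X (by simp)
    by_cases hki : k = i
    · subst hki
      exact ⟨X ⊞ A, B, biprod_mem (S k) hk hA, hB,
        ⟨(biprod.mapIso (Iso.refl X) e) ≪≫ (biprod.associator X A B).symm⟩⟩
    · have hXp : (sPerp S i).P X := fun Z hZ =>
        ⟨fun f => hS.2.1 k i hki f hk hZ, fun g => hS.2.1 i k (fun h' => hki h'.symm) g hZ hk⟩
      exact ⟨A, X ⊞ B, hA, biprod_mem (sPerp S i) hXp hB,
        ⟨(biprod.mapIso (Iso.refl X) e) ≪≫ (biprod.associator X A B).symm ≪≫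
          biprod.mapIso (biprod.braiding X A) (Iso.refl B) ≪≫ biprod.associator A X B⟩⟩

lemma split (hS : IsDirectSumDecomp S) (i : Γ) (X : E) :
    ∃ A B : E, (S i).P A ∧ (sPerp S i).P B ∧ Nonempty (X ≅ A ⊞ B) := by
  obtain ⟨l, hl, ⟨e⟩⟩ := hS.2.2 X
  obtain ⟨A, B, hA, hB, ⟨e'⟩⟩ := split_list hS i l hl
  exact ⟨A, B, hA, hB, ⟨e ≪≫ e'⟩⟩

end Two

end KRS
namespace KRS

open CategoryTheory Limits Pretriangulated Triangulated ZeroObject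

section Three

variable {C : Type u} [Category.{v} C] [HasZeroObject C] [HasShift C ℤ] [Preadditive C]
  [∀ n : ℤ, (shiftFunctor C n).Additive] [Pretriangulated C]
  {D : Type u} [Category.{v} D] [HasZeroObject D] [HasShift D ℤ] [Preadditive D]
  [∀ n : ℤ, (shiftFunctor D n).Additive] [Pretriangulated D]
  (Φ : C ≌ D) [Φ.functor.CommShift ℤ] [Φ.functor.IsTriangulated]

lemma isZero_Φ_iff (X : C) : IsZero (Φ.functor.obj X) ↔ IsZero X := by
  rw [IsZero.iff_id_eq_zero, IsZero.iff_id_eq_zero, ← Φ.functor.map_id,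
    Φ.functor.map_eq_zero_iff]

lemma conj_zero {X X' : C} (h0 : ∀ g : X ⟶ X', g = 0) {Y Z : D}
    (e : Φ.functor.obj X ≅ Y) (e' : Φ.functor.obj X' ≅ Z) (f : Y ⟶ Z) : f = 0 := by
  have h1 : e.hom ≫ f ≫ e'.inv = 0 := by
    rw [← Φ.functor.map_preimage (e.hom ≫ f ≫ e'.inv),
      h0 (Φ.functor.preimage (e.hom ≫ f ≫ e'.inv)), Functor.map_zero]
  calc f = e.inv ≫ (e.hom ≫ f ≫ e'.inv) ≫ e'.hom := by simp
  _ = 0 := by rw [h1, zero_comp, comp_zero]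

/-- The image of a class of objects under `Φ`. -/
def imClass (P : C → Prop) : D → Prop := fun Y => ∃ X, P X ∧ Nonempty (Φ.functor.obj X ≅ Y)

lemma imClass_shift (P : C → Prop) (hP : ∀ (X : C) (n : ℤ), P X → P (X⟦n⟧)) :
    ∀ (Y : D) (n : ℤ), imClass Φ P Y → imClass Φ P (Y⟦n⟧) := by
  rintro Y n ⟨X, hX, ⟨e⟩⟩
  exact ⟨X⟦n⟧, hP X n hX, ⟨(Φ.functor.commShiftIso n).app X ≪≫ (shiftFunctor D n).mapIso e⟩⟩

/-- Pullback of a subcategory intersected with a subcategory. -/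
def interPull (S' : Triangulated.Subcategory C) (T' : Triangulated.Subcategory D)
    [ObjectProperty.IsClosedUnderIsomorphisms S'.P] [ObjectProperty.IsClosedUnderIsomorphisms T'.P] :
    Triangulated.Subcategory C :=
  Subcategory.mk' (fun X => S'.P X ∧ T'.P (Φ.functor.obj X))
    ⟨S'.zero, ObjectProperty.prop_of_iso T'.P (Φ.functor.map_isZero (isZero_zero C)).isoZero.symm T'.zero⟩
    (fun X n h => ⟨S'.shift X n h.1,
      ObjectProperty.prop_of_iso T'.P ((Φ.functor.commShiftIso n).app X).symm
        (T'.shift (Φ.functor.obj X) n h.2)⟩)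
    (fun T hT h₁ h₃ => ⟨S'.ext₂ T hT h₁.1 h₃.1,
      T'.ext₂ (Φ.functor.mapTriangle.obj T) (Φ.functor.map_distinguished T hT) h₁.2 h₃.2⟩)

instance (S' : Triangulated.Subcategory C) (T' : Triangulated.Subcategory D)
    [ObjectProperty.IsClosedUnderIsomorphisms S'.P] [ObjectProperty.IsClosedUnderIsomorphisms T'.P] :
    ObjectProperty.IsClosedUnderIsomorphisms (interPull Φ S' T').P := by
  constructor
  intro X Y e h
  exact ⟨ObjectProperty.prop_of_iso _ e h.1, ObjectProperty.prop_of_iso _ (Φ.functor.mapIso e) h.2⟩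

/-- Intersection of two subcategories. -/
def inter (T' T'' : Triangulated.Subcategory D)
    [ObjectProperty.IsClosedUnderIsomorphisms T'.P] [ObjectProperty.IsClosedUnderIsomorphisms T''.P] :
    Triangulated.Subcategory D :=
  Subcategory.mk' (fun Y => T'.P Y ∧ T''.P Y)
    ⟨T'.zero, T''.zero⟩
    (fun Y n h => ⟨T'.shift Y n h.1, T''.shift Y n h.2⟩)
    (fun T hT h₁ h₃ => ⟨T'.ext₂ T hT h₁.1 h₃.1, T''.ext₂ T hT h₁.2 h₃.2⟩)

end Three

end KRS

namespace KRS2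
open CategoryTheory Limits
instance (priority := 50) {C D : Type*} [Category C] [Category D] [Preadditive C] [Preadditive D]
    (F : C ⥤ D) [F.Additive] : PreservesBinaryBiproducts F :=
  preservesBinaryBiproducts_of_preservesBiproducts F
end KRS2
namespace KRS

open CategoryTheory Limits Pretriangulated Triangulated ZeroObject

section Four

variable {C : Type u} [Category.{v} C] [HasZeroObject C] [HasShift C ℤ] [Preadditive C]
  [∀ n : ℤ, (shiftFunctor C n).Additive] [Pretriangulated C]
  {D : Type u} [Category.{v} D] [HasZeroObject D] [HasShift D ℤ] [Preadditive D]
  [∀ n : ℤ, (shiftFunctor D n).Additive] [Pretriangulated D]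
  (Φ : C ≌ D) [Φ.functor.CommShift ℤ] [Φ.functor.IsTriangulated]
  {Γ Λ : Type*} {S : Γ → Triangulated.Subcategory C} {T : Λ → Triangulated.Subcategory D}

lemma decomp_lemma (hS : IsDirectSumDecomp S) (hT : IsDirectSumDecomp T) (i : Γ) (j : Λ)
    [ObjectProperty.IsClosedUnderIsomorphisms (S i).P] [ObjectProperty.IsClosedUnderIsomorphisms (T j).P]
    (X : C) (hX : (S i).P X) :
    ∃ X₁ X₂ : C, (interPull Φ (S i) (T j)).P X₁ ∧ (interPull Φ (S i) (sPerp T j)).P X₂ ∧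
      Nonempty (X ≅ X₁ ⊞ X₂) ∧
      Nonempty (Φ.functor.obj X ≅ Φ.functor.obj X₁ ⊞ Φ.functor.obj X₂) := by
  obtain ⟨Y₁, Y₂, hY₁, hY₂, ⟨eY⟩⟩ := split hT j (Φ.functor.obj X)
  set X₁ := Φ.inverse.obj Y₁ with hX₁
  set X₂ := Φ.inverse.obj Y₂ with hX₂
  have c₁ : Φ.functor.obj X₁ ≅ Y₁ := Φ.counitIso.app Y₁
  have c₂ : Φ.functor.obj X₂ ≅ Y₂ := Φ.counitIso.app Y₂
  have eΦ : Φ.functor.obj X ≅ Φ.functor.obj X₁ ⊞ Φ.functor.obj X₂ :=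
    eY ≪≫ biprod.mapIso c₁.symm c₂.symm
  have eX : X ≅ X₁ ⊞ X₂ := Φ.functor.preimageIso (eΦ ≪≫ (Φ.functor.mapBiprod X₁ X₂).symm)
  have m₁ : (S i).P X₁ :=
    mem_of_retract hS hX (biprod.inl ≫ eX.inv) (eX.hom ≫ biprod.fst) (by simp)
  have m₂ : (S i).P X₂ :=
    mem_of_retract hS hX (biprod.inr ≫ eX.inv) (eX.hom ≫ biprod.snd) (by simp)
  exact ⟨X₁, X₂, ⟨m₁, ObjectProperty.prop_of_iso (T j).P c₁.symm hY₁⟩,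
    ⟨m₂, ObjectProperty.prop_of_iso (sPerp T j).P c₂.symm hY₂⟩, ⟨eX⟩, ⟨eΦ⟩⟩

lemma keyA (hS : IsDirectSumDecomp S) (hT : IsDirectSumDecomp T)
    (i : Γ) (hconn : IsConnectedP (S i).P) :
    ∃ j, ∀ X, (S i).P X → (T j).P (Φ.functor.obj X) := by
  haveI := hS.1 i
  obtain ⟨⟨X₀, hX₀, hX₀nz⟩, hconn2⟩ := hconn
  obtain ⟨l, hl, ⟨e⟩⟩ := hT.2.2 (Φ.functor.obj X₀)
  have hΦnz : ¬ IsZero (Φ.functor.obj X₀) := fun h => hX₀nz ((isZero_Φ_iff Φ X₀).1 h)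
  have hnz : ∃ Y ∈ l, ¬ IsZero Y := by
    by_contra h
    push_neg at h
    exact hΦnz (e.isZero_iff.2 (isZero_sumList l h))
  obtain ⟨Y', hY'mem, hY'nz⟩ := hnz
  obtain ⟨j, hY'⟩ := hl Y' hY'mem
  haveI := hT.1 j
  refine ⟨j, ?_⟩
  have horth1 : HomOrth (interPull Φ (S i) (T j)).P (interPull Φ (S i) (sPerp T j)).P := by
    intro X X' f h h'
    have hz : Φ.functor.map f = 0 := (h'.2 (Φ.functor.obj X) h.2).2 (Φ.functor.map f)
    exact Φ.functor.map_injective (by rw [hz, Functor.map_zero])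
  have horth2 : HomOrth (interPull Φ (S i) (sPerp T j)).P (interPull Φ (S i) (T j)).P := by
    intro X X' f h h'
    have hz : Φ.functor.map f = 0 := (h.2 (Φ.functor.obj X') h'.2).1 (Φ.functor.map f)
    exact Φ.functor.map_injective (by rw [hz, Functor.map_zero])
  have hdec : ∀ X, (S i).P X → ∃ X₁ X₂, (interPull Φ (S i) (T j)).P X₁ ∧
      (interPull Φ (S i) (sPerp T j)).P X₂ ∧ Nonempty (X ≅ X₁ ⊞ X₂) := by
    intro X hX
    obtain ⟨X₁, X₂, h₁, h₂, hXiso, _⟩ := decomp_lemma Φ hS hT i j X hX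
    exact ⟨X₁, X₂, h₁, h₂, hXiso⟩
  rcases hconn2 (interPull Φ (S i) (T j)) (interPull Φ (S i) (sPerp T j))
      (fun X h => h.1) (fun X h => h.1) horth1 horth2 hdec with hcase | hcase
  · exfalso
    obtain ⟨X₁, X₂, h₁, h₂, _, ⟨eΦ⟩⟩ := decomp_lemma Φ hS hT i j X₀ hX₀
    have hz₁ : IsZero X₁ := hcase X₁ h₁
    have hperp : (sPerp T j).P (Φ.functor.obj X₀) := ObjectProperty.prop_of_iso (sPerp T j).P eΦ.symm
      (biprod_mem (sPerp T j) (mem_of_isZero (sPerp T j) (Φ.functor.map_isZero hz₁)) h₂.2)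
    obtain ⟨ι, ρ, hιρ⟩ := retract_sumList l Y' hY'mem
    have h0 : (e.hom ≫ ρ : Φ.functor.obj X₀ ⟶ Y') = 0 := (hperp Y' hY').1 _
    have hρ : ρ = 0 := by
      rw [show ρ = e.inv ≫ (e.hom ≫ ρ) from by simp, h0, comp_zero]
    exact hY'nz ((IsZero.iff_id_eq_zero Y').2 (by rw [← hιρ, hρ, comp_zero]))
  · intro X hX
    obtain ⟨X₁, X₂, h₁, h₂, _, ⟨eΦ⟩⟩ := decomp_lemma Φ hS hT i j X hX
    have hz₂ : IsZero X₂ := hcase X₂ h₂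
    exact ObjectProperty.prop_of_iso (T j).P
      (eΦ ≪≫ biprodIsoLeft _ (Φ.functor.map_isZero hz₂)).symm h₁.2

end Four

end KRS
namespace KRS

open CategoryTheory Limits Pretriangulated Triangulated ZeroObject

section Five

variable {C : Type u} [Category.{v} C] [HasZeroObject C] [HasShift C ℤ] [Preadditive C]
  [∀ n : ℤ, (shiftFunctor C n).Additive] [Pretriangulated C]
  {D : Type u} [Category.{v} D] [HasZeroObject D] [HasShift D ℤ] [Preadditive D]
  [∀ n : ℤ, (shiftFunctor D n).Additive] [Pretriangulated D]
  (Φ : C ≌ D) [Φ.functor.CommShift ℤ] [Φ.functor.IsTriangulated]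
  {Γ Λ : Type*} {S : Γ → Triangulated.Subcategory C} {T : Λ → Triangulated.Subcategory D}

/-- `B ⊞ A ≅ A` when `B` is zero. -/
noncomputable def biprodIsoRight {B : C} (hB : IsZero B) (A : C) : B ⊞ A ≅ A where
  hom := biprod.snd
  inv := biprod.inr
  hom_inv_id := by
    apply biprod.hom_ext' <;> simp [hB.eq_of_src biprod.inl 0]
  inv_hom_id := by simp

lemma imOrth {i : Γ} {Y Z : D}
    (hY : imClass Φ (S i).P Y) (hZ : imClass Φ (sPerp S i).P Z) :
    (∀ f : Y ⟶ Z, f = 0) ∧ (∀ g : Z ⟶ Y, g = 0) := by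
  obtain ⟨X, hX, ⟨e⟩⟩ := hY
  obtain ⟨X', hX', ⟨e'⟩⟩ := hZ
  exact ⟨conj_zero Φ (fun g => (hX' X hX).2 g) e e',
    conj_zero Φ (fun g => (hX' X hX).1 g) e' e⟩

lemma decompD (hS : IsDirectSumDecomp S) (i : Γ) (Y : D) :
    ∃ A B : C, (S i).P A ∧ (sPerp S i).P B ∧
      Nonempty (Y ≅ Φ.functor.obj A ⊞ Φ.functor.obj B) := by
  obtain ⟨A, B, hA, hB, ⟨eX⟩⟩ := split hS i (Φ.inverse.obj Y)
  exact ⟨A, B, hA, hB,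
    ⟨(Φ.counitIso.app Y).symm ≪≫ Φ.functor.mapIso eX ≪≫ Φ.functor.mapBiprod A B⟩⟩

lemma purify (hS : IsDirectSumDecomp S) (i : Γ) (Y : D)
    (hY : ∀ Z, imClass Φ (sPerp S i).P Z → (∀ f : Y ⟶ Z, f = 0) ∧ (∀ g : Z ⟶ Y, g = 0)) :
    imClass Φ (S i).P Y := by
  obtain ⟨A, B, hA, hB, ⟨eD⟩⟩ := decompD Φ hS i Y
  have hzB : IsZero (Φ.functor.obj B) := by
    have h0 : (eD.hom ≫ biprod.snd : Y ⟶ Φ.functor.obj B) = 0 :=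
      (hY _ ⟨B, hB, ⟨Iso.refl _⟩⟩).1 _
    refine (IsZero.iff_id_eq_zero _).2 ?_
    calc 𝟙 (Φ.functor.obj B) = (biprod.inr ≫ eD.inv) ≫ (eD.hom ≫ biprod.snd) := by simp
    _ = 0 := by rw [h0, comp_zero]
  exact ⟨A, hA, ⟨(eD ≪≫ biprodIsoLeft _ hzB).symm⟩⟩

lemma purify' (hS : IsDirectSumDecomp S) (i : Γ) (Y : D)
    (hY : ∀ Z, imClass Φ (S i).P Z → (∀ f : Y ⟶ Z, f = 0) ∧ (∀ g : Z ⟶ Y, g = 0)) :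
    imClass Φ (sPerp S i).P Y := by
  obtain ⟨A, B, hA, hB, ⟨eD⟩⟩ := decompD Φ hS i Y
  have hzA : IsZero (Φ.functor.obj A) := by
    have h0 : (eD.hom ≫ biprod.fst : Y ⟶ Φ.functor.obj A) = 0 :=
      (hY _ ⟨A, hA, ⟨Iso.refl _⟩⟩).1 _
    refine (IsZero.iff_id_eq_zero _).2 ?_
    calc 𝟙 (Φ.functor.obj A) = (biprod.inl ≫ eD.inv) ≫ (eD.hom ≫ biprod.fst) := by simp
    _ = 0 := by rw [h0, comp_zero]
  exact ⟨B, hB, ⟨(eD ≪≫ biprodIsoRight hzA _).symm⟩⟩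

lemma keyB (hS : IsDirectSumDecomp S) (hT : IsDirectSumDecomp T) (i : Γ) (j : Λ)
    (hconnT : IsConnectedP (T j).P)
    (hij : ∀ X, (S i).P X → (T j).P (Φ.functor.obj X))
    (X₀ : C) (hX₀ : (S i).P X₀) (hX₀nz : ¬ IsZero X₀) :
    ∀ Y, (T j).P Y →
      (∀ Z, imClass Φ (S i).P Z → (∀ f : Y ⟶ Z, f = 0) ∧ (∀ g : Z ⟶ Y, g = 0)) →
      IsZero Y := by
  haveI := hS.1 i
  haveI := hT.1 j
  set T₁ := inter (T j) (perp (imClass Φ (sPerp S i).P)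
    (imClass_shift Φ _ (sPerp S i).shift)) with hT₁
  set T₂ := inter (T j) (perp (imClass Φ (S i).P)
    (imClass_shift Φ _ (S i).shift)) with hT₂
  have horth1 : HomOrth T₁.P T₂.P := by
    intro Y₁ Y₂ f h₁ h₂
    exact (imOrth Φ (purify Φ hS i Y₁ h₁.2) (purify' Φ hS i Y₂ h₂.2)).1 f
  have horth2 : HomOrth T₂.P T₁.P := by
    intro Y₂ Y₁ f h₂ h₁
    exact (imOrth Φ (purify Φ hS i Y₁ h₁.2) (purify' Φ hS i Y₂ h₂.2)).2 f
  have hdec : ∀ Y, (T j).P Y → ∃ Y₁ Y₂, T₁.P Y₁ ∧ T₂.P Y₂ ∧ Nonempty (Y ≅ Y₁ ⊞ Y₂) := by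
    intro Y hY
    obtain ⟨A, B, hA, hB, ⟨eD⟩⟩ := decompD Φ hS i Y
    refine ⟨Φ.functor.obj A, Φ.functor.obj B, ⟨?_, ?_⟩, ⟨?_, ?_⟩, ⟨eD⟩⟩
    · exact mem_of_retract hT hY (biprod.inl ≫ eD.inv) (eD.hom ≫ biprod.fst) (by simp)
    · exact fun Z hZ => imOrth Φ ⟨A, hA, ⟨Iso.refl _⟩⟩ hZ
    · exact mem_of_retract hT hY (biprod.inr ≫ eD.inv) (eD.hom ≫ biprod.snd) (by simp)
    · exact fun Z hZ => ⟨(imOrth Φ hZ ⟨B, hB, ⟨Iso.refl _⟩⟩).2,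
        (imOrth Φ hZ ⟨B, hB, ⟨Iso.refl _⟩⟩).1⟩
  rcases hconnT.2 T₁ T₂ (fun Y h => h.1) (fun Y h => h.1) horth1 horth2 hdec with hcase | hcase
  · exfalso
    refine hX₀nz ((isZero_Φ_iff Φ X₀).1 (hcase (Φ.functor.obj X₀) ⟨hij X₀ hX₀, ?_⟩))
    exact fun Z hZ => imOrth Φ ⟨X₀, hX₀, ⟨Iso.refl _⟩⟩ hZ
  · intro Y hYT hYperp
    exact hcase Y ⟨hYT, hYperp⟩

lemma keyC (hS : IsDirectSumDecomp S) (hT : IsDirectSumDecomp T) (i : Γ) (j : Λ)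
    (hconnT : IsConnectedP (T j).P)
    (hij : ∀ X, (S i).P X → (T j).P (Φ.functor.obj X))
    (X₀ : C) (hX₀ : (S i).P X₀) (hX₀nz : ¬ IsZero X₀) :
    ∀ Y, (T j).P Y → ∃ X, (S i).P X ∧ Nonempty (Φ.functor.obj X ≅ Y) := by
  intro Y hY
  haveI := hS.1 i
  haveI := hT.1 j
  obtain ⟨A, B, hA, hB, ⟨eD⟩⟩ := decompD Φ hS i Y
  have hTB : (T j).P (Φ.functor.obj B) :=
    mem_of_retract hT hY (biprod.inr ≫ eD.inv) (eD.hom ≫ biprod.snd) (by simp)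
  have hzB : IsZero (Φ.functor.obj B) :=
    keyB Φ hS hT i j hconnT hij X₀ hX₀ hX₀nz (Φ.functor.obj B) hTB
      (fun Z hZ => ⟨(imOrth Φ hZ ⟨B, hB, ⟨Iso.refl _⟩⟩).2,
        (imOrth Φ hZ ⟨B, hB, ⟨Iso.refl _⟩⟩).1⟩)
  exact ⟨A, hA, ⟨(eD ≪≫ biprodIsoLeft _ hzB).symm⟩⟩

lemma keyD (hS : IsDirectSumDecomp S) (hT : IsDirectSumDecomp T) (i : Γ) (j : Λ)
    (hconnT : IsConnectedP (T j).P)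
    (hij : ∀ X, (S i).P X → (T j).P (Φ.functor.obj X))
    (X₀ : C) (hX₀ : (S i).P X₀) (hX₀nz : ¬ IsZero X₀)
    (i' : Γ) (hi' : i' ≠ i) (X' : C) (hX' : (S i').P X')
    (hij' : (T j).P (Φ.functor.obj X')) : IsZero X' := by
  refine (isZero_Φ_iff Φ X').1
    (keyB Φ hS hT i j hconnT hij X₀ hX₀ hX₀nz (Φ.functor.obj X') hij' ?_)
  rintro Z ⟨X, hX, ⟨e⟩⟩
  exact ⟨conj_zero Φ (fun g => hS.2.1 i' i hi' g hX' hX) (Iso.refl _) e,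
    conj_zero Φ (fun g => hS.2.1 i i' (Ne.symm hi') g hX hX') e (Iso.refl _)⟩

end Five

end KRS

theorem stmt4 {R : Type*} [CommRing R]
    {C : Type u} [Category.{v} C] [HasZeroObject C] [HasShift C ℤ] [Preadditive C]
    [∀ n : ℤ, (shiftFunctor C n).Additive] [Pretriangulated C] [Linear R C]
    {D : Type u} [Category.{v} D] [HasZeroObject D] [HasShift D ℤ] [Preadditive D]
    [∀ n : ℤ, (shiftFunctor D n).Additive] [Pretriangulated D] [Linear R D]
    {Γ Λ : Type*} (S : Γ → Triangulated.Subcategory C) (T : Λ → Triangulated.Subcategory D)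
    (hS : IsDirectSumDecomp S) (hT : IsDirectSumDecomp T)
    (hSconn : ∀ i, IsConnectedP (S i).P) (hTconn : ∀ j, IsConnectedP (T j).P)
    (Φ : C ≌ D) [Φ.functor.CommShift ℤ] [Φ.functor.IsTriangulated] [Φ.functor.Linear R] :
    ∃ π : Γ → Λ, Function.Bijective π ∧
      (∀ (i : Γ) (X : C), (S i).P X → (T (π i)).P (Φ.functor.obj X)) ∧
      (∀ (i : Γ) (Y : D), (T (π i)).P Y →
        ∃ X : C, (S i).P X ∧ Nonempty (Φ.functor.obj X ≅ Y)) := by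
  classical
  choose π hπ using fun i : Γ => KRS.keyA Φ hS hT i (hSconn i)
  have hinj : Function.Injective π := by
    intro a b hab
    by_contra hne
    obtain ⟨Xb, hXb, hXbnz⟩ := (hSconn b).1
    obtain ⟨Xa, hXa, hXanz⟩ := (hSconn a).1
    have hb : (T (π a)).P (Φ.functor.obj Xb) := by rw [hab]; exact hπ b Xb hXb
    exact hXbnz (KRS.keyD Φ hS hT a (π a) (hTconn (π a)) (hπ a) Xa hXa hXanz b
      (fun h => hne h.symm) Xb hXb hb)
  have hsurj : Function.Surjective π := by
    intro j
    obtain ⟨Y₀, hY₀, hY₀nz⟩ := (hTconn j).1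
    obtain ⟨l, hl, ⟨e⟩⟩ := hS.2.2 (Φ.inverse.obj Y₀)
    have c : Φ.functor.obj (Φ.inverse.obj Y₀) ≅ Y₀ := Φ.counitIso.app Y₀
    have hXnz : ¬ IsZero (Φ.inverse.obj Y₀) := fun h =>
      hY₀nz (c.isZero_iff.1 (Φ.functor.map_isZero h))
    have hex : ∃ Z ∈ l, ¬ IsZero Z := by
      by_contra h
      push_neg at h
      exact hXnz (e.isZero_iff.2 (KRS.isZero_sumList l h))
    obtain ⟨Z, hZmem, hZnz⟩ := hex
    obtain ⟨k, hk⟩ := hl Z hZmem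
    refine ⟨k, ?_⟩
    by_contra hne
    obtain ⟨ι, ρ, hιρ⟩ := KRS.retract_sumList l Z hZmem
    have hρ' : (c.inv ≫ (Φ.functor.mapIso e).hom ≫ Φ.functor.map ρ :
        Y₀ ⟶ Φ.functor.obj Z) = 0 :=
      hT.2.1 j (π k) (fun h => hne h.symm) _ hY₀ (hπ k Z hk)
    have hid : 𝟙 (Φ.functor.obj Z) = (Φ.functor.map ι ≫ (Φ.functor.mapIso e).inv ≫ c.hom) ≫
        (c.inv ≫ (Φ.functor.mapIso e).hom ≫ Φ.functor.map ρ) := by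
      simp [← Functor.map_comp, hιρ]
    exact hZnz ((KRS.isZero_Φ_iff Φ Z).1 ((IsZero.iff_id_eq_zero _).2
      (by rw [hid, hρ', comp_zero])))
  refine ⟨π, ⟨hinj, hsurj⟩, hπ, ?_⟩
  intro i Y hY
  obtain ⟨Xi, hXi, hXinz⟩ := (hSconn i).1
  exact KRS.keyC Φ hS hT i (π i) (hTconn (π i)) (hπ i) Xi hXi hXinz Y hY
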